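/- arXiv:2003.09505 — 8 statements merged into one kernel-verified Lean document; each statement's English description precedes it below -/
import Mathlib

section
/- Let n ≥ 1, let p : {1,…,n} → [0,1] be a probability profile, let D > 0 be a target, and let σ be a sorting permutation for p. Let k be the smallest integer in {0,1,…,n} such that ∑_{i=1}^{k} p_{σ(i)} > D − 1/2, and set k = n if ∑_{i=1}^{n} p_{σ(i)} ≤ D − 1/2. Then the subset S = {σ(1),…,σ(k)} is optimal, i.e., f_{p,D}(S) ≤ f_{p,D}(T) for every subset T ⊆ {1,…,n}. -/
open Finset

/-- Expected loss `f_{p,D}(S) = (∑_{i∈S} p_i − D)² + ∑_{i∈S} p_i(1 − p_i)`. -/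
noncomputable def expLoss {n : ℕ} (p : Fin n → ℝ) (D : ℝ) (S : Finset (Fin n)) : ℝ :=
  (∑ i ∈ S, p i - D) ^ 2 + ∑ i ∈ S, p i * (1 - p i)

/-- The set `{σ(1),…,σ(k)}` (1-based), i.e. the image under `σ` of the first `k` indices. -/
def prefixSet {n : ℕ} (σ : Equiv.Perm (Fin n)) (k : ℕ) : Finset (Fin n) :=
  (Finset.univ.filter fun i : Fin n => (i : ℕ) < k).image σ

noncomputable def gfun {n : ℕ} (p : Fin n → ℝ) (c : ℝ) (S : Finset (Fin n)) : ℝ :=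
  (∑ i ∈ S, p i - c) ^ 2 - ∑ i ∈ S, (p i)^2

lemma mem_prefixSet {n : ℕ} {σ : Equiv.Perm (Fin n)} {k : ℕ} {x : Fin n} :
    x ∈ prefixSet σ k ↔ ((σ.symm x : Fin n) : ℕ) < k := by
  simp only [prefixSet, mem_image, mem_filter, mem_univ, true_and]
  constructor
  · rintro ⟨i, hi, rfl⟩; simpa using hi
  · intro h; exact ⟨σ.symm x, h, σ.apply_symm_apply x⟩

lemma gfun_insert {n : ℕ} (p : Fin n → ℝ) (c : ℝ) {S : Finset (Fin n)} {x : Fin n}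
    (hx : x ∉ S) :
    gfun p c (insert x S) = gfun p c S + 2 * p x * (∑ i ∈ S, p i - c) := by
  unfold gfun
  rw [Finset.sum_insert hx, Finset.sum_insert hx]; ring

-- comparison lemma
lemma gfun_compare {n : ℕ} {p : Fin n → ℝ} (c : ℝ) {r : ℝ} (hp0 : ∀ i, 0 ≤ p i)
    {P T : Finset (Fin n)}
    (hPr : ∀ x ∈ P, r ≤ p x) (hPr' : ∀ x, x ∉ P → p x ≤ r) :
    gfun p c P + ((∑ i ∈ T, p i - c)^2 - (∑ i ∈ P, p i - c)^2
      - r * (∑ i ∈ T, p i - ∑ i ∈ P, p i)) ≤ gfun p c T := by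
  have hT : ∑ i ∈ T ∩ P, (p i)^2 + ∑ i ∈ T \ P, (p i)^2 = ∑ i ∈ T, (p i)^2 :=
    Finset.sum_inter_add_sum_sdiff T P _
  have hP : ∑ i ∈ P ∩ T, (p i)^2 + ∑ i ∈ P \ T, (p i)^2 = ∑ i ∈ P, (p i)^2 :=
    Finset.sum_inter_add_sum_sdiff P T _
  have hT1 : ∑ i ∈ T ∩ P, p i + ∑ i ∈ T \ P, p i = ∑ i ∈ T, p i :=
    Finset.sum_inter_add_sum_sdiff T P _
  have hP1 : ∑ i ∈ P ∩ T, p i + ∑ i ∈ P \ T, p i = ∑ i ∈ P, p i :=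
    Finset.sum_inter_add_sum_sdiff P T _
  have hcomm : T ∩ P = P ∩ T := Finset.inter_comm T P
  have h1 : ∑ i ∈ T \ P, (p i)^2 ≤ r * ∑ i ∈ T \ P, p i := by
    rw [Finset.mul_sum]
    apply Finset.sum_le_sum
    intro i hi
    have hiP : i ∉ P := (Finset.mem_sdiff.1 hi).2
    have := hPr' i hiP
    have h0 := hp0 i
    nlinarith
  have h2 : r * ∑ i ∈ P \ T, p i ≤ ∑ i ∈ P \ T, (p i)^2 := by
    rw [Finset.mul_sum]
    apply Finset.sum_le_sum
    intro i hi
    have hiP : i ∈ P := (Finset.mem_sdiff.1 hi).1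
    have := hPr i hiP
    have h0 := hp0 i
    nlinarith
  unfold gfun
  rw [hcomm] at hT hT1
  have e1 : r * (∑ i ∈ T, p i) = r * (∑ i ∈ P ∩ T, p i) + r * (∑ i ∈ T \ P, p i) := by
    rw [← hT1]; ring
  have e2 : r * (∑ i ∈ P, p i) = r * (∑ i ∈ P ∩ T, p i) + r * (∑ i ∈ P \ T, p i) := by
    rw [← hP1]; ring
  nlinarith [h1, h2, e1, e2]

lemma case1 {n : ℕ} (p : Fin n → ℝ) (c : ℝ) (hp0 : ∀ i, 0 ≤ p i)
    (σ : Equiv.Perm (Fin n)) (hσ : ∀ i j : Fin n, i ≤ j → p (σ j) ≤ p (σ i))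
    (k : ℕ) (hk1 : 1 ≤ k) (hkn : k ≤ n)
    (hlow : ∑ i ∈ prefixSet σ (k-1), p i ≤ c)
    (hhigh : c < ∑ i ∈ prefixSet σ k, p i) :
    ∀ m, ∀ T : Finset (Fin n), (T \ prefixSet σ k).card ≤ m →
      gfun p c (prefixSet σ k) ≤ gfun p c T := by
  have hk1n : k - 1 < n := by omega
  set z : Fin n := σ ⟨k-1, hk1n⟩ with hz
  set P' := prefixSet σ (k-1) with hP'
  set P := prefixSet σ k with hPdef
  have hsymz : σ.symm z = ⟨k-1, hk1n⟩ := σ.symm_apply_apply _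
  have hzP' : z ∉ P' := by
    rw [hP', mem_prefixSet, hsymz]
    exact (by omega : ¬ (k-1:ℕ) < k - 1)
  have hPins : P = insert z P' := by
    ext x
    rw [hPdef, mem_prefixSet, Finset.mem_insert, hP', mem_prefixSet]
    constructor
    · intro hx
      by_cases h2 : ((σ.symm x : Fin n) : ℕ) < k - 1
      · exact Or.inr h2
      · left
        have h3 : σ.symm x = ⟨k-1, hk1n⟩ := Fin.ext (by simp only [Fin.val_mk]; omega)
        rw [hz, ← h3, σ.apply_symm_apply]
    · rintro (rfl | hx)
      · rw [hsymz]; exact (by omega : (k-1:ℕ) < k)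
      · omega
  -- bounds via r
  set r : ℝ := p z with hr
  have hle : ∀ x : Fin n, ((σ.symm x : Fin n) : ℕ) ≤ k - 1 → r ≤ p x := by
    intro x hx
    have : (σ.symm x : Fin n) ≤ ⟨k-1, hk1n⟩ := by
      rw [Fin.le_def]; exact hx
    have := hσ _ _ this
    rwa [σ.apply_symm_apply] at this
  have hge : ∀ x : Fin n, k - 1 ≤ ((σ.symm x : Fin n) : ℕ) → p x ≤ r := by
    intro x hx
    have : (⟨k-1, hk1n⟩ : Fin n) ≤ σ.symm x := by
      rw [Fin.le_def]; exact hx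
    have := hσ _ _ this
    rwa [σ.apply_symm_apply] at this
  have hrP : ∀ x ∈ P, r ≤ p x := fun x hx =>
    hle x (by have := mem_prefixSet.1 hx; omega)
  have hrPc : ∀ x, x ∉ P → p x ≤ r := fun x hx =>
    hge x (by
      have h4 : ¬ ((σ.symm x : Fin n) : ℕ) < k := fun h => hx (mem_prefixSet.2 h)
      omega)
  have hrP' : ∀ x ∈ P', r ≤ p x := fun x hx =>
    hle x (by have := mem_prefixSet.1 hx; omega)
  have hrP'c : ∀ x, x ∉ P' → p x ≤ r := fun x hx =>
    hge x (by
      have h4 : ¬ ((σ.symm x : Fin n) : ℕ) < k - 1 := fun h => hx (mem_prefixSet.2 h)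
      omega)
  -- sums and basic facts
  have hsum : ∑ i ∈ P, p i = r + ∑ i ∈ P', p i := by
    rw [hPins, Finset.sum_insert hzP']
  have hgP : gfun p c P = gfun p c P' + 2 * r * (∑ i ∈ P', p i - c) := by
    rw [hPins, gfun_insert p c hzP']
  have hr0 : 0 ≤ r := hp0 z
  have hrpos : 0 < r := by linarith [hhigh, hlow, hsum]
  have core : ∀ T : Finset (Fin n), gfun p c P ≤ gfun p c T ∨
      ∃ T', gfun p c T' ≤ gfun p c T ∧ (T' \ P).card + 1 ≤ (T \ P).card := by
    intro T
    have hdirect := gfun_compare c hp0 hrP' hrP'c (T := T)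
    set t := ∑ i ∈ T, p i with ht
    set s' := ∑ i ∈ P', p i with hs'
    set s := ∑ i ∈ P, p i with hsS
    have hEeq : (t - c + (s' - c)) * (t - c - (s' - c) - r)
        = (t - c)^2 - (s' - c)^2 - r * (t - s') - 2 * r * (s' - c) := by ring
    by_cases hE : 0 ≤ (t - c + (s' - c)) * (t - c - (s' - c) - r)
    · left; linarith [hdirect, hgP, hE, hEeq]
    · right
      push_neg at hE
      have hu : 0 < t - c := by
        by_contra h
        push_neg at h
        have h1 : t - c + (s' - c) ≤ 0 := by linarith [hlow]
        have h2 : t - c - (s' - c) - r ≤ 0 := by linarith [hhigh, hsum]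
        nlinarith [mul_nonneg (neg_nonneg.2 h1) (neg_nonneg.2 h2)]
      have hA : (T \ P).Nonempty := by
        rw [Finset.sdiff_nonempty]
        intro hTP
        have hsplit : ∑ i ∈ P \ T, p i + ∑ i ∈ T, p i = ∑ i ∈ P, p i :=
          Finset.sum_sdiff hTP
        by_cases hB : (P \ T).Nonempty
        · obtain ⟨y, hy⟩ := hB
          have h1 : r ≤ p y := hrP y (Finset.mem_sdiff.1 hy).1
          have h2 : p y ≤ ∑ i ∈ P \ T, p i :=
            Finset.single_le_sum (fun i _ => hp0 i) hy
          linarith [hsum, hlow]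
        · rw [Finset.not_nonempty_iff_eq_empty, Finset.sdiff_eq_empty_iff_subset] at hB
          have hTeq : t = s := by rw [ht, hsS, Finset.Subset.antisymm hTP hB]
          have : t - c - (s' - c) - r = 0 := by
            rw [hTeq]; linarith [hsum]
          nlinarith [hE, this]
      obtain ⟨x, hx⟩ := hA
      have hxT : x ∈ T := (Finset.mem_sdiff.1 hx).1
      have hxP : x ∉ P := (Finset.mem_sdiff.1 hx).2
      have hq : p x ≤ r := hrPc x hxP
      have herase : ∑ i ∈ T.erase x, p i = t - p x := by
        rw [ht, ← Finset.sum_erase_add T _ hxT]; ring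
      have hgerase : gfun p c T = gfun p c (T.erase x) + 2 * p x * (t - p x - c) := by
        have hxe : x ∉ T.erase x := Finset.notMem_erase x T
        have h5 := gfun_insert p c hxe
        rw [Finset.insert_erase hxT] at h5
        rw [h5, herase]
      have hcard : (T.erase x \ P).card + 1 ≤ (T \ P).card := by
        have h6 : T.erase x \ P = (T \ P).erase x := Finset.erase_sdiff_comm T P x
        have h7 : 0 < (T \ P).card := Finset.card_pos.2 ⟨x, hx⟩
        rw [h6, Finset.card_erase_of_mem hx]
        omega
      by_cases hqu : p x ≤ t - c
      · refine ⟨T.erase x, ?_, hcard⟩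
        nlinarith [hgerase, mul_nonneg (hp0 x) (by linarith : (0:ℝ) ≤ t - p x - c)]
      · push_neg at hqu
        have hBne : (P \ T).Nonempty := by
          by_contra hB
          rw [Finset.not_nonempty_iff_eq_empty, Finset.sdiff_eq_empty_iff_subset] at hB
          have hsub : insert x P ⊆ T := Finset.insert_subset hxT hB
          have h8 : ∑ i ∈ insert x P, p i ≤ t :=
            Finset.sum_le_sum_of_subset_of_nonneg hsub (fun i _ _ => hp0 i)
          rw [Finset.sum_insert hxP] at h8
          linarith [hhigh]
        obtain ⟨y, hy⟩ := hBne
        have hyP : y ∈ P := (Finset.mem_sdiff.1 hy).1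
        have hyT : y ∉ T := (Finset.mem_sdiff.1 hy).2
        have hq' : r ≤ p y := hrP y hyP
        have hye : y ∉ T.erase x := fun h => hyT (Finset.mem_of_mem_erase h)
        have hgT' : gfun p c (insert y (T.erase x))
            = gfun p c (T.erase x) + 2 * p y * (t - p x - c) := by
          rw [gfun_insert p c hye, herase]
        refine ⟨insert y (T.erase x), ?_, ?_⟩
        · nlinarith [hgerase, hgT',
            mul_nonneg (by linarith : (0:ℝ) ≤ p y - p x)
              (by linarith : (0:ℝ) ≤ -(t - p x - c))]
        · have h9 : insert y (T.erase x) \ P = T.erase x \ P :=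
            Finset.insert_sdiff_of_mem _ hyP
          rw [h9]; exact hcard
  intro m
  induction m with
  | zero =>
    intro T hT
    rcases core T with h | ⟨T', _, hc⟩
    · exact h
    · omega
  | succ m ih =>
    intro T hT
    rcases core T with h | ⟨T', hle', hc⟩
    · exact h
    · exact le_trans (ih T' (by omega)) hle'

lemma expLoss_eq_gfun {n : ℕ} (p : Fin n → ℝ) (D : ℝ) (S : Finset (Fin n)) :
    expLoss p D S = gfun p (D - 1/2) S + (D - 1/4) := by
  unfold expLoss gfun
  have h : ∑ i ∈ S, p i * (1 - p i) = ∑ i ∈ S, p i - ∑ i ∈ S, (p i)^2 := by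
    rw [← Finset.sum_sub_distrib]
    exact Finset.sum_congr rfl fun i _ => by ring
  rw [h]; ring

lemma prefixSet_zero {n : ℕ} (σ : Equiv.Perm (Fin n)) : prefixSet σ 0 = ∅ := by
  ext x; rw [mem_prefixSet]; simp

lemma prefixSet_n {n : ℕ} (σ : Equiv.Perm (Fin n)) : prefixSet σ n = Finset.univ := by
  ext x; rw [mem_prefixSet]; simp [(σ.symm x).isLt]

-- sum of squares bounded by square of sum
lemma sq_sum_le {n : ℕ} (p : Fin n → ℝ) (hp0 : ∀ i, 0 ≤ p i) (T : Finset (Fin n)) :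
    ∑ i ∈ T, (p i)^2 ≤ (∑ i ∈ T, p i)^2 := by
  have h : ∀ i ∈ T, (p i)^2 ≤ p i * ∑ j ∈ T, p j := by
    intro i hi
    have h1 : p i ≤ ∑ j ∈ T, p j := Finset.single_le_sum (fun j _ => hp0 j) hi
    nlinarith [hp0 i]
  calc ∑ i ∈ T, (p i)^2 ≤ ∑ i ∈ T, p i * ∑ j ∈ T, p j := Finset.sum_le_sum h
    _ = (∑ i ∈ T, p i)^2 := by rw [← Finset.sum_mul]; ring

-- case k = 0 : c < 0
lemma case0 {n : ℕ} (p : Fin n → ℝ) (c : ℝ) (hp0 : ∀ i, 0 ≤ p i) (hc : c < 0)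
    (T : Finset (Fin n)) : gfun p c ∅ ≤ gfun p c T := by
  have h1 := sq_sum_le p hp0 T
  have h2 : 0 ≤ ∑ i ∈ T, p i := Finset.sum_nonneg fun i _ => hp0 i
  unfold gfun
  simp only [Finset.sum_empty]
  nlinarith [mul_nonneg h2 (by linarith : (0:ℝ) ≤ -c)]

-- case k = n with total ≤ c
lemma case2 {n : ℕ} (p : Fin n → ℝ) (c : ℝ) (hp0 : ∀ i, 0 ≤ p i)
    (htot : ∑ i ∈ (Finset.univ : Finset (Fin n)), p i ≤ c) :
    ∀ m, ∀ T : Finset (Fin n), ((Finset.univ : Finset (Fin n)) \ T).card ≤ m →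
      gfun p c Finset.univ ≤ gfun p c T := by
  intro m
  induction m with
  | zero =>
    intro T hT
    have h : (Finset.univ : Finset (Fin n)) \ T = ∅ := Finset.card_eq_zero.1 (by omega)
    rw [Finset.sdiff_eq_empty_iff_subset] at h
    rw [(Finset.univ_subset_iff.1 h)]
  | succ m ih =>
    intro T hT
    by_cases hTu : T = Finset.univ
    · rw [hTu]
    · obtain ⟨x, hxT⟩ : ∃ x, x ∉ T := by
        by_contra h; push_neg at h
        exact hTu (Finset.eq_univ_of_forall h)
      have hins := gfun_insert p c hxT
      have hsub : ∑ i ∈ insert x T, p i ≤ ∑ i ∈ Finset.univ, p i :=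
        Finset.sum_le_sum_of_subset_of_nonneg (Finset.subset_univ _) (fun i _ _ => hp0 i)
      rw [Finset.sum_insert hxT] at hsub
      have hstep : gfun p c (insert x T) ≤ gfun p c T := by
        nlinarith [hins, mul_nonneg (hp0 x) (by linarith [hp0 x] : (0:ℝ) ≤ -(∑ i ∈ T, p i - c))]
      have hcard : ((Finset.univ : Finset (Fin n)) \ insert x T).card ≤ m := by
        have h1 : (Finset.univ : Finset (Fin n)) \ insert x T
            = ((Finset.univ : Finset (Fin n)) \ T).erase x := by
          rw [Finset.sdiff_insert]
        have hxm : x ∈ (Finset.univ : Finset (Fin n)) \ T :=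
          Finset.mem_sdiff.2 ⟨Finset.mem_univ x, hxT⟩
        have h2 : 0 < ((Finset.univ : Finset (Fin n)) \ T).card := Finset.card_pos.2 ⟨x, hxm⟩
        rw [h1, Finset.card_erase_of_mem hxm]
        omega
      exact le_trans (ih (insert x T) hcard) hstep

theorem stmt_0 {n : ℕ} (hn : 1 ≤ n) (p : Fin n → ℝ)
    (hp : ∀ i, 0 ≤ p i ∧ p i ≤ 1) (D : ℝ) (hD : 0 < D)
    (σ : Equiv.Perm (Fin n)) (hσ : ∀ i j : Fin n, i ≤ j → p (σ j) ≤ p (σ i))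
    (k : ℕ) (hk : k ≤ n)
    (hkdef :
      ((∑ i ∈ prefixSet σ k, p i > D - 1/2) ∧
        ∀ m < k, ∑ i ∈ prefixSet σ m, p i ≤ D - 1/2) ∨
      (k = n ∧ ∑ i ∈ prefixSet σ n, p i ≤ D - 1/2)) :
    ∀ T : Finset (Fin n), expLoss p D (prefixSet σ k) ≤ expLoss p D T := by
  intro T
  rw [expLoss_eq_gfun, expLoss_eq_gfun]
  have hp0 : ∀ i, 0 ≤ p i := fun i => (hp i).1
  set c := D - 1/2 with hc
  suffices h : gfun p c (prefixSet σ k) ≤ gfun p c T by linarith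
  rcases hkdef with ⟨hhigh, hlowall⟩ | ⟨hkn, htot⟩
  · rcases Nat.eq_zero_or_pos k with rfl | hk1
    · rw [prefixSet_zero]
      apply case0 p c hp0 _ T
      rw [prefixSet_zero] at hhigh
      simpa using hhigh
    · exact case1 p c hp0 σ hσ k hk1 hk (hlowall (k-1) (by omega)) hhigh _ T le_rfl
  · subst hkn
    rw [prefixSet_n] at htot ⊢
    exact case2 p c hp0 htot _ T le_rfl
end

section
/- Let n ≥ 1, let p : {1,…,n} → [0,1] be a probability profile, and let D be a target with 0 < D < 1/2. Then the empty set is optimal, i.e., f_{p,D}(∅) ≤ f_{p,D}(S) for every subset S ⊆ {1,…,n}. -/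
open Finset

theorem stmt_1 {n : ℕ} (hn : 1 ≤ n) (p : Fin n → ℝ)
    (hp : ∀ i, 0 ≤ p i ∧ p i ≤ 1) (D : ℝ) (hD : 0 < D) (hD2 : D < 1/2) :
    ∀ S : Finset (Fin n), expLoss p D (∅ : Finset (Fin n)) ≤ expLoss p D S := by
  intro S
  simp only [expLoss, Finset.sum_empty, zero_sub, neg_sq, add_zero]
  set T := ∑ i ∈ S, p i with hT
  have hT0 : 0 ≤ T := Finset.sum_nonneg fun i _ => (hp i).1
  have hsq : ∑ i ∈ S, (p i) ^ 2 ≤ T ^ 2 := by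
    calc ∑ i ∈ S, (p i) ^ 2 ≤ ∑ i ∈ S, p i * T := by
          refine Finset.sum_le_sum fun i hi => ?_
          have : p i ≤ T := Finset.single_le_sum (fun j _ => (hp j).1) hi
          nlinarith [(hp i).1]
      _ = T ^ 2 := by rw [← Finset.sum_mul]; ring
  have hV : ∑ i ∈ S, p i * (1 - p i) = T - ∑ i ∈ S, (p i) ^ 2 := by
    rw [← Finset.sum_sub_distrib]
    exact Finset.sum_congr rfl fun i _ => by ring
  rw [hV]
  nlinarith [hT0, hsq]
end

section
/- Let n ≥ 1, let p : {1,…,n} → [0,1] be a probability profile, and let D > 0 be a target with ∑_{i=1}^{n} p_i ≤ D − 1/2. Then the full set {1,…,n} is optimal, i.e., f_{p,D}({1,…,n}) ≤ f_{p,D}(S) for every subset S ⊆ {1,…,n}. -/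
open Finset

theorem stmt_2 {n : ℕ} (hn : 1 ≤ n) (p : Fin n → ℝ)
    (hp : ∀ i, 0 ≤ p i ∧ p i ≤ 1) (D : ℝ) (hD : 0 < D)
    (hsum : ∑ i, p i ≤ D - 1/2) :
    ∀ S : Finset (Fin n), expLoss p D (Finset.univ : Finset (Fin n)) ≤ expLoss p D S := by
  intro S
  have hsplit : ∑ i ∈ S, p i + ∑ i ∈ Sᶜ, p i = ∑ i, p i :=
    Finset.sum_add_sum_compl S p
  have hsplitq : ∑ i ∈ S, p i * (1 - p i) + ∑ i ∈ Sᶜ, p i * (1 - p i)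
      = ∑ i, p i * (1 - p i) := Finset.sum_add_sum_compl S _
  have ht : 0 ≤ ∑ i ∈ Sᶜ, p i := Finset.sum_nonneg fun i _ => (hp i).1
  have hs : 0 ≤ ∑ i ∈ S, p i := Finset.sum_nonneg fun i _ => (hp i).1
  have hq : ∑ i ∈ Sᶜ, p i * (1 - p i) ≤ ∑ i ∈ Sᶜ, p i := by
    apply Finset.sum_le_sum
    intro i _
    nlinarith [(hp i).1, (hp i).2]
  simp only [expLoss]
  nlinarith [hsplit, hsplitq, ht, hs, hq, hsum,
    mul_nonneg ht (by nlinarith : (0:ℝ) ≤ D - 1/2 - ∑ i, p i)]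
end

section
/- Let n ≥ 1, let p : {1,…,n} → (0,1] be a probability profile with p_i > 0 for all i, let D > 0 be a target, and suppose S* ⊆ {1,…,n} is optimal. Then: (a) for every j ∈ S*, ∑_{i ∈ S*∖{j}} p_i ≤ D − 1/2; and (b) if S* ≠ {1,…,n}, then ∑_{i ∈ S*} p_i ≥ D − 1/2. -/
open Finset

theorem stmt_3 {n : ℕ} (hn : 1 ≤ n) (p : Fin n → ℝ)
    (hp : ∀ i, 0 < p i ∧ p i ≤ 1) (D : ℝ) (hD : 0 < D)
    (Sstar : Finset (Fin n))
    (hopt : ∀ S : Finset (Fin n), expLoss p D Sstar ≤ expLoss p D S) :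
    (∀ j ∈ Sstar, ∑ i ∈ Sstar.erase j, p i ≤ D - 1/2) ∧
    (Sstar ≠ Finset.univ → D - 1/2 ≤ ∑ i ∈ Sstar, p i) := by
  constructor
  · intro j hj
    have h := hopt (Sstar.erase j)
    have hsum : ∑ i ∈ Sstar, p i = p j + ∑ i ∈ Sstar.erase j, p i :=
      (Finset.add_sum_erase _ _ hj).symm
    have hsum2 : ∑ i ∈ Sstar, p i * (1 - p i)
        = p j * (1 - p j) + ∑ i ∈ Sstar.erase j, p i * (1 - p i) :=
      (Finset.add_sum_erase _ _ hj).symm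
    have hpj := (hp j).1
    simp only [expLoss, hsum, hsum2] at h
    nlinarith [h, hpj]
  · intro hne
    obtain ⟨j, hj⟩ : ∃ j, j ∉ Sstar := by
      by_contra h; push_neg at h; exact hne (Finset.eq_univ_iff_forall.mpr h)
    have h := hopt (insert j Sstar)
    have hsum : ∑ i ∈ insert j Sstar, p i = p j + ∑ i ∈ Sstar, p i :=
      Finset.sum_insert hj
    have hsum2 : ∑ i ∈ insert j Sstar, p i * (1 - p i)
        = p j * (1 - p j) + ∑ i ∈ Sstar, p i * (1 - p i) :=
      Finset.sum_insert hj
    have hpj := (hp j).1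
    simp only [expLoss, hsum, hsum2] at h
    nlinarith [h, hpj]
end

section
/- Let n ≥ 1, let p : {1,…,n} → (0,1] be a probability profile with p_i > 0 for all i, and let D be a target with D ≥ 1/2 and ∑_{i=1}^{n} p_i > D − 1/2. Then there exists an optimal subset S* ⊆ {1,…,n} such that for every i ∉ S* and every j ∈ S*, p_i ≤ p_j (i.e., S* contains all arms whose parameter exceeds the smallest parameter occurring in S*). -/
open Finset

theorem stmt_4 {n : ℕ} (hn : 1 ≤ n) (p : Fin n → ℝ)
    (hp : ∀ i, 0 < p i ∧ p i ≤ 1) (D : ℝ) (hD : 1/2 ≤ D)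
    (hsum : D - 1/2 < ∑ i, p i) :
    ∃ Sstar : Finset (Fin n),
      (∀ S : Finset (Fin n), expLoss p D Sstar ≤ expLoss p D S) ∧
      (∀ i ∉ Sstar, ∀ j ∈ Sstar, p i ≤ p j) := by
  classical
  obtain ⟨S0, -, hmin⟩ := (univ : Finset (Finset (Fin n))).exists_min_image
    (expLoss p D) ⟨∅, mem_univ _⟩
  set m := expLoss p D S0 with hm
  have hmin' : ∀ S : Finset (Fin n), m ≤ expLoss p D S := fun S => hmin S (mem_univ S)
  set M : Finset (Finset (Fin n)) :=
    (univ : Finset (Finset (Fin n))).filter (fun S => expLoss p D S = m) with hM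
  have hMne : M.Nonempty := ⟨S0, by simp [hM, hm]⟩
  obtain ⟨Sstar, hSM, hmax⟩ := M.exists_max_image (fun S => ∑ i ∈ S, p i) hMne
  have hSstar : expLoss p D Sstar = m := (mem_filter.mp hSM).2
  refine ⟨Sstar, fun S => hSstar ▸ hmin' S, ?_⟩
  intro i hi j hj
  by_contra hcon
  push_neg at hcon
  have hij : i ≠ j := fun h => hi (h ▸ hj)
  have hie : i ∉ Sstar.erase j := fun h => hi (mem_of_mem_erase h)
  set a := p j
  set b := p i
  set A := ∑ k ∈ Sstar.erase j, p k with hA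
  set V := ∑ k ∈ Sstar.erase j, p k * (1 - p k) with hV
  have hsumS : ∑ k ∈ Sstar, p k = A + a := by
    rw [hA, Finset.sum_erase_add _ _ hj]
  have hsumV : ∑ k ∈ Sstar, p k * (1 - p k) = V + a * (1 - a) := by
    rw [hV, Finset.sum_erase_add _ _ hj]
  have hLS : expLoss p D Sstar = (A + a - D) ^ 2 + (V + a * (1 - a)) := by
    rw [expLoss, hsumS, hsumV]
  -- erase j is not better
  have hErase : m ≤ (A - D) ^ 2 + V := by
    have := hmin' (Sstar.erase j)
    rwa [expLoss] at this
  have ha : 0 < a := (hp j).1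
  have hAle : A ≤ D - 1/2 := by
    have h1 : (A + a - D) ^ 2 + (V + a * (1 - a)) ≤ (A - D) ^ 2 + V := by
      rw [← hLS, hSstar]; exact hErase
    nlinarith
  -- the swap set
  set S' := insert i (Sstar.erase j) with hS'
  have hLS' : expLoss p D S' = (A + b - D) ^ 2 + (V + b * (1 - b)) := by
    rw [expLoss, hS', Finset.sum_insert hie, Finset.sum_insert hie, hA, hV]; ring
  have hle : expLoss p D S' ≤ expLoss p D Sstar := by
    rw [hLS, hLS']
    nlinarith [hcon, hAle]
  have heq : expLoss p D S' = m :=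
    le_antisymm (hSstar ▸ hle) (hmin' S')
  have hS'M : S' ∈ M := mem_filter.mpr ⟨mem_univ _, heq⟩
  have hmaxle := hmax S' hS'M
  have hsumS' : ∑ k ∈ S', p k = A + b := by
    rw [hS', Finset.sum_insert hie, hA]; ring
  rw [hsumS, hsumS'] at hmaxle
  linarith
end

section
/- Let m ≥ 0 and let p : {1,…,m+1} → [0,1] satisfy p_1 ≥ p_2 ≥ … ≥ p_{m+1}. Let D ∈ ℝ and let j, k be integers with 1 ≤ j ≤ k ≤ m+1. Define δ_x = ∑_{i=1}^{k} p_i − (D − 1/2) and δ_y = ∑_{i ∈ {1,…,m+1}∖{j}} p_i − (D − 1/2), and assume 0 < δ_x ≤ p_k and 0 ≤ δ_y ≤ p_{m+1}. Then f_{p,D}({1,…,k}) ≤ f_{p,D}({1,…,m+1} ∖ {j}). -/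
set_option maxHeartbeats 1000000

open Finset

private lemma key_scalar (a c s dx dy T n : ℝ) (h1 : 0 ≤ dy) (h2 : dy ≤ s) (h3 : s ≤ c)
    (h4 : c ≤ a) (h5 : 0 < dx) (h6 : dx ≤ c) (hT : T = a + dy - dx) (hn : 1 ≤ n)
    (hns : n*s ≤ T - s) (hnc : T - s ≤ n*c) :
    (s+c)*(T-s) - n*s*c + s^2 ≤ a^2 + dy^2 - dx^2 := by
  nlinarith [mul_nonneg (sub_nonneg.2 h2) (sub_nonneg.2 h3), mul_nonneg (sub_nonneg.2 h4) (sub_nonneg.2 h6),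
    mul_nonneg (sub_nonneg.2 hn) (mul_nonneg (le_trans h1 h2) (le_trans (le_trans h1 h2) h3)),
    mul_nonneg (sub_nonneg.2 hns) (sub_nonneg.2 h3), mul_nonneg (sub_nonneg.2 hnc) (le_trans h1 h2),
    mul_nonneg (sub_nonneg.2 hns) (le_of_lt h5), mul_nonneg (sub_nonneg.2 hnc) (le_of_lt h5),
    mul_nonneg (sub_nonneg.2 h2) h1, sq_nonneg (a - c), sq_nonneg (s - dy), sq_nonneg (dx - dy)]

theorem stmt_11 (m : ℕ) (p : Fin (m + 1) → ℝ)
    (hp : ∀ i, 0 ≤ p i ∧ p i ≤ 1)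
    (hmono : ∀ i j : Fin (m + 1), i ≤ j → p j ≤ p i)
    (D : ℝ) (j k : ℕ) (hj1 : 1 ≤ j) (hjk : j ≤ k) (hk : k ≤ m + 1)
    (δx δy : ℝ)
    (hδx : δx = ∑ i ∈ (Finset.univ.filter fun i : Fin (m + 1) => (i : ℕ) < k), p i
        - (D - 1/2))
    (hδy : δy = ∑ i ∈ Finset.univ.erase (⟨j - 1, by omega⟩ : Fin (m + 1)), p i
        - (D - 1/2))
    (hδx_pos : 0 < δx) (hδx_le : δx ≤ p (⟨k - 1, by omega⟩ : Fin (m + 1)))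
    (hδy_nonneg : 0 ≤ δy) (hδy_le : δy ≤ p (⟨m, by omega⟩ : Fin (m + 1))) :
    expLoss p D (Finset.univ.filter fun i : Fin (m + 1) => (i : ℕ) < k)
      ≤ expLoss p D (Finset.univ.erase (⟨j - 1, by omega⟩ : Fin (m + 1))) := by
  have hjm : j - 1 < m + 1 := by omega
  have hkm : k - 1 < m + 1 := by omega
  set jj : Fin (m + 1) := ⟨j - 1, hjm⟩ with hjj
  set kk : Fin (m + 1) := ⟨k - 1, hkm⟩ with hkk
  set mm : Fin (m + 1) := ⟨m, by omega⟩ with hmm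
  set X := Finset.univ.filter (fun i : Fin (m + 1) => (i : ℕ) < k) with hX
  set Tl := Finset.univ.filter (fun i : Fin (m + 1) => ¬ (i : ℕ) < k) with hTl
  have hδy' : δy = ∑ i ∈ Finset.univ.erase jj, p i - (D - 1/2) := hδy
  have hδx_le' : δx ≤ p kk := hδx_le
  have hδy_le' : δy ≤ p mm := hδy_le
  show expLoss p D X ≤ expLoss p D (Finset.univ.erase jj)
  set A := ∑ i ∈ X, p i with hA
  set T := ∑ i ∈ Tl, p i with hT
  set QX := ∑ i ∈ X, (p i)^2 with hQX
  set QT := ∑ i ∈ Tl, (p i)^2 with hQT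
  have hsplitp : A + T = ∑ i, p i := Finset.sum_filter_add_sum_filter_not _ _ _
  have hsplitq : QX + QT = ∑ i, (p i)^2 := Finset.sum_filter_add_sum_filter_not _ _ _
  have hprod : ∀ S : Finset (Fin (m + 1)), ∑ i ∈ S, p i * (1 - p i)
      = ∑ i ∈ S, p i - ∑ i ∈ S, (p i)^2 := by
    intro S
    rw [← Finset.sum_sub_distrib]
    exact Finset.sum_congr rfl (fun i _ => by ring)
  have hYp : ∑ i ∈ Finset.univ.erase jj, p i = A + T - p jj := by
    rw [Finset.sum_erase_eq_sub (Finset.mem_univ jj), ← hsplitp]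
  have hYq : ∑ i ∈ Finset.univ.erase jj, (p i)^2 = QX + QT - (p jj)^2 := by
    rw [Finset.sum_erase_eq_sub (Finset.mem_univ jj), ← hsplitq]
  have hca : p kk ≤ p jj := hmono jj kk (by simp only [hjj, hkk, Fin.mk_le_mk]; omega)
  have hsc : p mm ≤ p kk := hmono kk mm (by simp only [hkk, hmm, Fin.mk_le_mk]; omega)
  have hrel : δy = δx + T - p jj := by
    rw [hδy', hYp, hδx]; ring
  -- key inequality
  have key : QT ≤ (p jj)^2 + δy^2 - δx^2 := by
    rcases Nat.lt_or_ge k (m + 1) with hklt | hkge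
    · -- tail nonempty
      have hmmTl : mm ∈ Tl := by
        simp only [hTl, Finset.mem_filter, Finset.mem_univ, true_and, hmm]
        omega
      set E := Tl.erase mm with hE
      have hQTe : ∑ i ∈ E, (p i)^2 = QT - (p mm)^2 :=
        Finset.sum_erase_eq_sub hmmTl
      have hTe : ∑ i ∈ E, p i = T - p mm :=
        Finset.sum_erase_eq_sub hmmTl
      have hEc : ∀ i ∈ E, p i ≤ p kk := by
        intro i hi
        have hiTl := Finset.mem_of_mem_erase hi
        simp only [hTl, Finset.mem_filter, Finset.mem_univ, true_and] at hiTl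
        exact hmono kk i (by rw [Fin.le_def]; simp only [hkk]; omega)
      have hEs : ∀ i ∈ E, p mm ≤ p i := by
        intro i hi
        exact hmono i mm (by rw [Fin.le_def]; simp only [hmm]; omega)
      have hcardc : (T - p mm) ≤ (E.card : ℝ) * p kk := by
        have := Finset.sum_le_card_nsmul E p (p kk) hEc
        rw [nsmul_eq_mul] at this
        rw [← hTe]; exact this
      have hcards : (E.card : ℝ) * p mm ≤ T - p mm := by
        have := Finset.card_nsmul_le_sum E p (p mm) hEs
        rw [nsmul_eq_mul] at this
        rw [← hTe]; exact this
      have hsumq : ∑ i ∈ E, (p i)^2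
          ≤ (p mm + p kk) * (T - p mm) - (E.card : ℝ) * (p mm * p kk) := by
        have h1 : ∑ i ∈ E, (p i)^2 ≤ ∑ i ∈ E, ((p mm + p kk) * p i - p mm * p kk) := by
          apply Finset.sum_le_sum
          intro i hi
          nlinarith [mul_nonneg (sub_nonneg.2 (hEs i hi)) (sub_nonneg.2 (hEc i hi))]
        calc ∑ i ∈ E, (p i)^2 ≤ ∑ i ∈ E, ((p mm + p kk) * p i - p mm * p kk) := h1
          _ = (p mm + p kk) * (T - p mm) - (E.card : ℝ) * (p mm * p kk) := by
              rw [Finset.sum_sub_distrib, ← Finset.mul_sum, hTe, Finset.sum_const,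
                nsmul_eq_mul]
      rcases Nat.eq_zero_or_pos E.card with hc0 | hc1
      · -- E empty : T = p mm, QT = (p mm)^2
        rw [hc0] at hcardc hcards
        push_cast at hcardc hcards
        have hTs : T = p mm := by linarith
        have hQTv : QT = (p mm)^2 := by
          have hE0 : E = ∅ := Finset.card_eq_zero.mp hc0
          rw [hE0, Finset.sum_empty] at hQTe
          linarith
        rw [hQTv]
        nlinarith [mul_nonneg (sub_nonneg.2 (le_trans hδx_le' hca)) (sub_nonneg.2 (show δy ≤ δx by nlinarith)),
          hδy_nonneg, hδx_pos]
      · have hn1 : (1:ℝ) ≤ (E.card : ℝ) := by exact_mod_cast hc1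
        have := key_scalar (p jj) (p kk) (p mm) δx δy T (E.card : ℝ)
          hδy_nonneg hδy_le' hsc hca hδx_pos hδx_le' (by linarith) hn1
          (by linarith) (by linarith)
        nlinarith [hsumq, hQTe, this]
    · -- tail empty
      have hTl0 : Tl = ∅ := by
        rw [hTl, Finset.filter_eq_empty_iff]
        intro i _
        simp only [not_not]
        omega
      have hT0 : T = 0 := by rw [hT, hTl0, Finset.sum_empty]
      have hQT0 : QT = 0 := by rw [hQT, hTl0, Finset.sum_empty]
      have hy0 : δy = 0 := by
        have : δx ≤ p jj := le_trans hδx_le' hca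
        linarith [hrel]
      have hxa : δx = p jj := by rw [hy0] at hrel; linarith [hT0]
      rw [hQT0, hy0, hxa]; ring_nf; nlinarith [hT0]
  -- final assembly
  have e1 : expLoss p D X = (A - D)^2 + (A - QX) := by
    simp only [expLoss, hprod, ← hA, ← hQX]
  have e2 : expLoss p D (Finset.univ.erase jj)
      = (A + T - p jj - D)^2 + ((A + T - p jj) - (QX + QT - (p jj)^2)) := by
    simp only [expLoss, hprod, hYp, hYq]
  rw [e1, e2]
  have hxA : A - D = δx - 1/2 := by rw [hδx]; ring
  have hyA : A + T - p jj - D = δy - 1/2 := by rw [hrel, hδx]; ring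
  nlinarith [key, hrel, hxA, hyA]
end

section
/- Let n ≥ 1, let p : {1,…,n} → [0,1] be a probability profile with a sorting permutation σ, let D ∈ ℝ, and let 1 ≤ l ≤ n. Then: (a) f_{p,D}({σ(1),…,σ(l−1)}) − f_{p,D}({σ(1),…,σ(l)}) = 2 p_{σ(l)} · ((D − 1/2) − ∑_{i=1}^{l−1} p_{σ(i)}); and (b) if l ≤ n − 1, then f_{p,D}({σ(1),…,σ(l+1)}) − f_{p,D}({σ(1),…,σ(l)}) = 2 p_{σ(l+1)} · (∑_{i=1}^{l} p_{σ(i)} − (D − 1/2)). -/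
open Finset

lemma prefix_succ {n : ℕ} (σ : Equiv.Perm (Fin n)) (k : ℕ) (hk : k < n) :
    prefixSet σ (k + 1) = insert (σ ⟨k, hk⟩) (prefixSet σ k) := by
  ext x
  simp only [prefixSet, mem_image, mem_filter, mem_univ, true_and, mem_insert]
  constructor
  · rintro ⟨i, hi, rfl⟩
    rcases Nat.lt_succ_iff_lt_or_eq.mp hi with h | h
    · exact Or.inr ⟨i, h, rfl⟩
    · exact Or.inl (by congr 1; exact Fin.ext h)
  · rintro (rfl | ⟨i, hi, rfl⟩)
    · exact ⟨⟨k, hk⟩, Nat.lt_succ_self k, rfl⟩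
    · exact ⟨i, Nat.lt_succ_of_lt hi, rfl⟩

lemma not_mem_prefix {n : ℕ} (σ : Equiv.Perm (Fin n)) (k : ℕ) (hk : k < n) :
    σ ⟨k, hk⟩ ∉ prefixSet σ k := by
  simp only [prefixSet, mem_image, mem_filter, mem_univ, true_and]
  rintro ⟨i, hi, h⟩
  have := σ.injective h
  subst this
  exact absurd hi (lt_irrefl k)

lemma expLoss_step {n : ℕ} (p : Fin n → ℝ) (D : ℝ) (σ : Equiv.Perm (Fin n)) (k : ℕ) (hk : k < n) :
    expLoss p D (prefixSet σ (k + 1)) - expLoss p D (prefixSet σ k)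
      = 2 * p (σ ⟨k, hk⟩) * (∑ i ∈ prefixSet σ k, p i - (D - 1/2)) := by
  rw [prefix_succ σ k hk, expLoss, expLoss,
    sum_insert (not_mem_prefix σ k hk), sum_insert (not_mem_prefix σ k hk)]
  ring

theorem stmt_13 {n : ℕ} (hn : 1 ≤ n) (p : Fin n → ℝ)
    (hp : ∀ i, 0 ≤ p i ∧ p i ≤ 1) (D : ℝ)
    (σ : Equiv.Perm (Fin n)) (hσ : ∀ i j : Fin n, i ≤ j → p (σ j) ≤ p (σ i))
    (l : ℕ) (hl1 : 1 ≤ l) (hl2 : l ≤ n) :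
    -- (a)
    (expLoss p D (prefixSet σ (l - 1)) - expLoss p D (prefixSet σ l)
      = 2 * p (σ ⟨l - 1, by omega⟩)
          * ((D - 1/2) - ∑ i ∈ prefixSet σ (l - 1), p i)) ∧
    -- (b)
    (∀ hl3 : l ≤ n - 1,
      expLoss p D (prefixSet σ (l + 1)) - expLoss p D (prefixSet σ l)
        = 2 * p (σ ⟨l, by omega⟩)
            * (∑ i ∈ prefixSet σ l, p i - (D - 1/2))) := by
  constructor
  · have hk : l - 1 < n := by omega
    have h := expLoss_step p D σ (l - 1) hk
    have hl : l - 1 + 1 = l := by omega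
    rw [hl] at h
    linarith [h]
  · intro hl3
    exact expLoss_step p D σ l (by omega)
end

section
/- Let n ≥ 1, let p : {1,…,n} → [0,1] be a probability profile with a sorting permutation σ, let D ∈ ℝ, let 1 ≤ l ≤ n, and let ε ≥ 0. Then: (a) if ∑_{i=1}^{l−1} p_{σ(i)} ≥ D − 1/2 − (l−1)ε, then f_{p,D}({σ(1),…,σ(l−1)}) − f_{p,D}({σ(1),…,σ(l)}) ≤ 2(l−1)ε ≤ 2nε; and (b) if l ≤ n − 1 and ∑_{i=1}^{l} p_{σ(i)} ≤ D − 1/2 + lε, then f_{p,D}({σ(1),…,σ(l+1)}) − f_{p,D}({σ(1),…,σ(l)}) ≤ 2lε ≤ 2nε. In other words, selecting one arm fewer or one arm more than the sorted prefix of length l incurs excess expected loss at most 2nε under the respective near-target condition. -/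
open Finset

lemma expLoss_insert {n : ℕ} (p : Fin n → ℝ) (D : ℝ) (S : Finset (Fin n)) (a : Fin n)
    (ha : a ∉ S) :
    expLoss p D (insert a S) - expLoss p D S
      = p a * (2 * (∑ i ∈ S, p i) - 2 * D + 1) := by
  simp [expLoss, Finset.sum_insert ha]
  ring

theorem stmt_14 {n : ℕ} (hn : 1 ≤ n) (p : Fin n → ℝ)
    (hp : ∀ i, 0 ≤ p i ∧ p i ≤ 1) (D : ℝ)
    (σ : Equiv.Perm (Fin n)) (hσ : ∀ i j : Fin n, i ≤ j → p (σ j) ≤ p (σ i))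
    (l : ℕ) (hl1 : 1 ≤ l) (hl2 : l ≤ n) (ε : ℝ) (hε : 0 ≤ ε) :
    -- (a)
    ((∑ i ∈ prefixSet σ (l - 1), p i ≥ D - 1/2 - ((l : ℝ) - 1) * ε →
      expLoss p D (prefixSet σ (l - 1)) - expLoss p D (prefixSet σ l)
        ≤ 2 * ((l : ℝ) - 1) * ε ∧
      2 * ((l : ℝ) - 1) * ε ≤ 2 * (n : ℝ) * ε) ∧
    -- (b)
    (∀ _hl3 : l ≤ n - 1,
      ∑ i ∈ prefixSet σ l, p i ≤ D - 1/2 + (l : ℝ) * ε →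
      expLoss p D (prefixSet σ (l + 1)) - expLoss p D (prefixSet σ l)
        ≤ 2 * (l : ℝ) * ε ∧
      2 * (l : ℝ) * ε ≤ 2 * (n : ℝ) * ε)) := by
  have hln : (l : ℝ) ≤ n := by exact_mod_cast hl2
  constructor
  · intro hsum
    obtain ⟨m, rfl⟩ : ∃ m, l = m + 1 := ⟨l - 1, (Nat.succ_pred_eq_of_pos hl1).symm⟩
    have hm : m < n := lt_of_lt_of_le (Nat.lt_succ_self m) hl2
    simp only [Nat.add_sub_cancel] at hsum ⊢
    set q := p (σ ⟨m, hm⟩) with hq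
    have hq0 := (hp (σ ⟨m, hm⟩)).1
    have hq1 := (hp (σ ⟨m, hm⟩)).2
    have hins := expLoss_insert p D (prefixSet σ m) (σ ⟨m, hm⟩) (not_mem_prefix σ m hm)
    rw [prefix_succ σ m hm]
    set s := ∑ i ∈ prefixSet σ m, p i with hs
    push_cast at hsum hln ⊢
    have hsum' : s ≥ D - 1/2 - (m : ℝ) * ε := by linarith
    have h1 : q * (s - (D - 1/2 - (m : ℝ) * ε)) ≥ 0 :=
      mul_nonneg hq0 (by linarith)
    have h2 : (1 - q) * ((m : ℝ) * ε) ≥ 0 :=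
      mul_nonneg (by linarith) (mul_nonneg (Nat.cast_nonneg m) hε)
    have h3 : ((n : ℝ) - m) * ε ≥ 0 :=
      mul_nonneg (by linarith) hε
    constructor
    · nlinarith [hins]
    · nlinarith
  · intro hl3 hsum
    have hm : l < n := lt_of_le_of_lt hl3 (Nat.sub_lt (lt_of_lt_of_le Nat.zero_lt_one hn) Nat.one_pos)
    set q := p (σ ⟨l, hm⟩) with hq
    have hq0 := (hp (σ ⟨l, hm⟩)).1
    have hq1 := (hp (σ ⟨l, hm⟩)).2
    have hins := expLoss_insert p D (prefixSet σ l) (σ ⟨l, hm⟩) (not_mem_prefix σ l hm)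
    rw [prefix_succ σ l hm]
    set s := ∑ i ∈ prefixSet σ l, p i with hs
    have h1 : q * ((D - 1/2 + (l : ℝ) * ε) - s) ≥ 0 :=
      mul_nonneg hq0 (by linarith)
    have h2 : (1 - q) * ((l : ℝ) * ε) ≥ 0 :=
      mul_nonneg (by linarith) (mul_nonneg (Nat.cast_nonneg l) hε)
    have h3 : ((n : ℝ) - l) * ε ≥ 0 :=
      mul_nonneg (by linarith) hε
    constructor
    · nlinarith [hins]
    · nlinarith
end
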